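/- arXiv:1705.01652 — 7 statements merged into one kernel-verified Lean document; each statement's English description precedes it below -/
import Mathlib

section
/- Let D ⊆ ℤ³ be a curtain, i.e. (C1) for every k ∈ ℤ the intersection D ∩ (ℤ²×{k}) is a bi-infinite path whose steps are all e₁=(1,0,0) or -e₂=(0,-1,0) with no three consecutive steps in the same direction, and (C2) for all x ∈ D, either x+(0,0,-1) ∈ D or x+(1,1,-1) ∈ D. Then for every k, D intersects the diagonal line {(t,t,k) : t ∈ ℤ} in exactly one site. -/
/-- Sites of the cubic lattice `ℤ³`. -/
abbrev Site := ℤ × ℤ × ℤ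

/-- (C1) for layer `k`: the intersection of `D` with the layer `ℤ² × {k}` is a
bi-infinite path whose steps are all `e₁ = (1,0,0)` or `-e₂ = (0,-1,0)`,
with no three consecutive steps in the same direction. -/
def LayerPath (D : Set Site) (k : ℤ) : Prop :=
  ∃ f : ℤ → Site,
    (∀ t : ℤ, (f t).2.2 = k) ∧
    Function.Injective f ∧
    (∀ x : Site, (x ∈ D ∧ x.2.2 = k) ↔ ∃ t : ℤ, f t = x) ∧
    (∀ t : ℤ, f (t + 1) - f t = ((1 : ℤ), (0 : ℤ), (0 : ℤ)) ∨
              f (t + 1) - f t = ((0 : ℤ), (-1 : ℤ), (0 : ℤ))) ∧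
    (∀ t : ℤ, ¬ (f (t + 1) - f t = f (t + 2) - f (t + 1) ∧
                 f (t + 2) - f (t + 1) = f (t + 3) - f (t + 2)))

/-- A curtain: (C1) in every layer, together with (C2). -/
def IsCurtain (D : Set Site) : Prop :=
  (∀ k : ℤ, LayerPath D k) ∧
  (∀ x ∈ D, x + ((0 : ℤ), (0 : ℤ), (-1 : ℤ)) ∈ D ∨ x + ((1 : ℤ), (1 : ℤ), (-1 : ℤ)) ∈ D)

/-- A curtain intersects each diagonal line `{(t,t,k) : t ∈ ℤ}` in exactly one site. -/
theorem curtain_meets_diagonal_uniquely (D : Set Site) (hD : IsCurtain D) (k : ℤ) :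
    ∃! t : ℤ, ((t, t, k) : Site) ∈ D := by
  obtain ⟨hC1, -⟩ := hD
  obtain ⟨f, hk, hinj, hmem, hstep, -⟩ := hC1 k
  have hstep1 : ∀ t : ℤ, (f (t+1)).1 - (f (t+1)).2.1 = ((f t).1 - (f t).2.1) + 1 := by
    intro t
    rcases hstep t with h | h <;>
    · rw [Prod.ext_iff, Prod.ext_iff] at h
      simp only [Prod.fst_sub, Prod.snd_sub] at h
      omega
  have hlin : ∀ t : ℤ, (f t).1 - (f t).2.1 = ((f 0).1 - (f 0).2.1) + t := by
    intro t
    induction t using Int.induction_on with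
    | zero => simp
    | succ n ih => have := hstep1 n; push_cast at *; omega
    | pred n ih =>
        have := hstep1 (-(n:ℤ)-1)
        rw [show -(n:ℤ)-1+1 = -n from by ring] at this
        omega
  set t₀ : ℤ := -((f 0).1 - (f 0).2.1) with ht₀
  have h0 : (f t₀).1 = (f t₀).2.1 := by have := hlin t₀; omega
  refine ⟨(f t₀).1, ?_, ?_⟩
  · have hft : f t₀ = ((f t₀).1, (f t₀).1, k) := by
      rw [Prod.ext_iff, Prod.ext_iff]
      exact ⟨rfl, h0.symm, hk t₀⟩
    exact ((hmem _).2 ⟨t₀, hft⟩).1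
  · intro s hs
    obtain ⟨t, ht⟩ := (hmem ((s, s, k) : Site)).1 ⟨hs, rfl⟩
    have h1 : (f t).1 = s := by rw [ht]
    have h2 : (f t).2.1 = s := by rw [ht]
    have := hlin t
    have htt : t = t₀ := by omega
    rw [htt] at h1
    omega
end

section
/- With the setup of permissible paths as above (taxed step (1,1,0) landing on a closed site, free steps in {(-1,0,0),(0,-1,0),(0,0,-1),(-2,1,0),(1,-2,0),(-1,-1,1)}), let A be the set reachable from an arbitrary set H and D := {x ∉ A : x-(1,1,0) ∈ A}. Then D satisfies condition (C2): for all x ∈ D, either x+(0,0,-1) ∈ D or x+(1,1,-1) ∈ D. -/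
/-- The free steps. -/
def FreeStep (v : Site) : Prop :=
  v = ((-1 : ℤ), (0 : ℤ), (0 : ℤ)) ∨ v = ((0 : ℤ), (-1 : ℤ), (0 : ℤ)) ∨
  v = ((0 : ℤ), (0 : ℤ), (-1 : ℤ)) ∨ v = ((-2 : ℤ), (1 : ℤ), (0 : ℤ)) ∨
  v = ((1 : ℤ), (-2 : ℤ), (0 : ℤ)) ∨ v = ((-1 : ℤ), (-1 : ℤ), (1 : ℤ))

/-- `Reach C H x` : the site `x` is reachable from the set `H` by a permissible path,
where a step is either free, or is the taxed step `(1,1,0)` landing on a site of the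
closed set `C`. -/
inductive Reach (C H : Set Site) : Site → Prop
  | base {x : Site} : x ∈ H → Reach C H x
  | free {x y : Site} : Reach C H x → FreeStep (y - x) → Reach C H y
  | taxed {x y : Site} : Reach C H x → y ∈ C → y - x = ((1 : ℤ), (1 : ℤ), (0 : ℤ)) →
      Reach C H y

/-- The outer boundary `D = {x ∉ A : x - (1,1,0) ∈ A}` of the reachable set `A`. -/
def Dset (C H : Set Site) : Set Site :=
  {x | ¬ Reach C H x ∧ Reach C H (x - ((1 : ℤ), (1 : ℤ), (0 : ℤ)))}


/-- `D` satisfies property (C2) of a curtain: for every `x ∈ D`,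
either `x + (0,0,-1) ∈ D` or `x + (1,1,-1) ∈ D`. -/
theorem Dset_C2 (C H : Set Site) :
    ∀ x ∈ Dset C H,
      x + ((0 : ℤ), (0 : ℤ), (-1 : ℤ)) ∈ Dset C H ∨
      x + ((1 : ℤ), (1 : ℤ), (-1 : ℤ)) ∈ Dset C H := by
  rintro x ⟨hxA, hxm⟩
  by_cases hp : Reach C H (x + ((0 : ℤ), (0 : ℤ), (-1 : ℤ)))
  · right
    refine ⟨fun hq => hxA ?_, ?_⟩
    · refine Reach.free hq ?_
      refine Or.inr (Or.inr (Or.inr (Or.inr (Or.inr ?_))))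
      obtain ⟨a, b, c⟩ := x
      simp [Prod.ext_iff]
    · have : x + ((1 : ℤ), (1 : ℤ), (-1 : ℤ)) - ((1 : ℤ), (1 : ℤ), (0 : ℤ))
          = x + ((0 : ℤ), (0 : ℤ), (-1 : ℤ)) := by
        obtain ⟨a, b, c⟩ := x
        simp [Prod.ext_iff]
      rw [this]; exact hp
  · left
    refine ⟨hp, ?_⟩
    refine Reach.free hxm ?_
    refine Or.inr (Or.inr (Or.inl ?_))
    obtain ⟨a, b, c⟩ := x
    simp [Prod.ext_iff]
end

section
/- With the same setup (A the set reachable by permissible paths from H, D := {x ∉ A : x-(1,1,0) ∈ A}), if 0 ∈ D then exactly one of (1,0,0) ∈ D or (0,-1,0) ∈ D holds, and exactly one of (-1,0,0) ∈ D or (0,1,0) ∈ D holds. -/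
/-- If `0 ∈ D` then exactly one of `(1,0,0) ∈ D`, `(0,-1,0) ∈ D` holds, and
exactly one of `(-1,0,0) ∈ D`, `(0,1,0) ∈ D` holds. -/
theorem Dset_neighbors (C H : Set Site)
    (h0 : (((0 : ℤ), (0 : ℤ), (0 : ℤ)) : Site) ∈ Dset C H) :
    Xor' ((((1 : ℤ), (0 : ℤ), (0 : ℤ)) : Site) ∈ Dset C H)
         ((((0 : ℤ), (-1 : ℤ), (0 : ℤ)) : Site) ∈ Dset C H) ∧
    Xor' ((((-1 : ℤ), (0 : ℤ), (0 : ℤ)) : Site) ∈ Dset C H)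
         ((((0 : ℤ), (1 : ℤ), (0 : ℤ)) : Site) ∈ Dset C H) := by

  obtain ⟨hA0, hAm⟩ := h0
  have hAm' : Reach C H ((-1 : ℤ), (-1 : ℤ), (0 : ℤ)) := by
    convert hAm using 2 <;> rfl
  have f1 : ¬ Reach C H ((1 : ℤ), (0 : ℤ), (0 : ℤ)) := fun h =>
    hA0 (Reach.free h (by left; norm_num [Prod.sub_def, Prod.ext_iff]))
  have f2 : Reach C H ((-1 : ℤ), (-2 : ℤ), (0 : ℤ)) :=
    Reach.free hAm' (by right; left; norm_num [Prod.sub_def, Prod.ext_iff])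
  have f3 : Reach C H ((-2 : ℤ), (-1 : ℤ), (0 : ℤ)) :=
    Reach.free hAm' (by left; norm_num [Prod.sub_def, Prod.ext_iff])
  have f4 : ¬ Reach C H ((0 : ℤ), (1 : ℤ), (0 : ℤ)) := fun h =>
    hA0 (Reach.free h (by right; left; norm_num [Prod.sub_def, Prod.ext_iff]))
  simp only [Dset, Set.mem_setOf_eq, Prod.sub_def] at *
  norm_num
  constructor
  · by_cases hS : Reach C H ((0 : ℤ), (-1 : ℤ), (0 : ℤ))
    · exact Or.inl ⟨⟨f1, hS⟩, fun h => h.1 hS⟩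
    · exact Or.inr ⟨⟨hS, f2⟩, fun h => hS h.2⟩
  · by_cases hR : Reach C H ((-1 : ℤ), (0 : ℤ), (0 : ℤ))
    · exact Or.inr ⟨⟨f4, hR⟩, fun h => h.1 hR⟩
    · exact Or.inl ⟨⟨hR, f3⟩, fun h => hR h.2⟩
end

section
/- With the same setup, if 0 ∈ D then (0,-3,0) ∈ A and (2,-1,0) ∉ A; consequently (0,-3,0) ∉ D and (3,0,0) ∉ D. (This rules out three consecutive steps in the same direction in the layer path of D.) -/
/-- If `0 ∈ D` then `(0,-3,0) ∈ A` and `(2,-1,0) ∉ A`; consequently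
`(0,-3,0) ∉ D` and `(3,0,0) ∉ D`. -/
theorem Dset_no_three_consecutive (C H : Set Site)
    (h0 : (((0 : ℤ), (0 : ℤ), (0 : ℤ)) : Site) ∈ Dset C H) :
    Reach C H (((0 : ℤ), (-3 : ℤ), (0 : ℤ)) : Site) ∧
    ¬ Reach C H (((2 : ℤ), (-1 : ℤ), (0 : ℤ)) : Site) ∧
    (((0 : ℤ), (-3 : ℤ), (0 : ℤ)) : Site) ∉ Dset C H ∧
    (((3 : ℤ), (0 : ℤ), (0 : ℤ)) : Site) ∉ Dset C H := by
  obtain ⟨hn0, hm⟩ := h0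
  have hm' : Reach C H (((-1 : ℤ), (-1 : ℤ), (0 : ℤ)) : Site) := by
    convert hm <;> rfl
  have h1 : Reach C H (((0 : ℤ), (-3 : ℤ), (0 : ℤ)) : Site) := by
    refine Reach.free hm' ?_
    right; right; right; right; left
    simp [Prod.ext_iff]
  have h2 : ¬ Reach C H (((2 : ℤ), (-1 : ℤ), (0 : ℤ)) : Site) := by
    intro h
    apply hn0
    refine Reach.free h ?_
    right; right; right; left
    simp [Prod.ext_iff]
  refine ⟨h1, h2, ?_, ?_⟩
  · intro hd; exact hd.1 h1
  · intro hd
    apply h2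
    convert hd.2 <;> rfl
end

section
/- Let each site of ℤ³ be independently closed with probability q < 8⁻³. Then the probability that the site (k,k,0) is reachable from the half-space H = {x : x₁+x₂+x₃ ≤ 0} by a permissible path is at most 8·(7q)^k for every k ≥ 1. -/
open MeasureTheory

/-- The half-space `H = {x : x₁ + x₂ + x₃ ≤ 0}`. -/
def Hhalf : Set Site := {x | x.1 + x.2.1 + x.2.2 ≤ 0}

namespace PRDaux

def tx : Site := ((1 : ℤ), (1 : ℤ), (0 : ℤ))

def ψ (x : Site) : ℤ := x.1 + x.2.1 + x.2.2

def Vfin : Finset Site :=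
  {((-1 : ℤ), (0 : ℤ), (0 : ℤ)), ((0 : ℤ), (-1 : ℤ), (0 : ℤ)), ((0 : ℤ), (0 : ℤ), (-1 : ℤ)),
   ((-2 : ℤ), (1 : ℤ), (0 : ℤ)), ((1 : ℤ), (-2 : ℤ), (0 : ℤ)), ((-1 : ℤ), (-1 : ℤ), (1 : ℤ)),
   ((1 : ℤ), (1 : ℤ), (0 : ℤ))}

def ok (C : Set Site) : Site → List Site → Prop
  | _, [] => True
  | e, v :: s => (FreeStep v ∨ (v = tx ∧ e ∈ C)) ∧ ok C (e - v) s

def strt : Site → List Site → Site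
  | e, [] => e
  | e, v :: s => strt (e - v) s

def pts : Site → List Site → List Site
  | e, [] => [e]
  | e, v :: s => e :: pts (e - v) s

def txd : Site → List Site → List Site
  | _, [] => []
  | e, v :: s => (if v = tx then [e] else []) ++ txd (e - v) s

lemma freeStep_ne_tx {v : Site} (h : FreeStep v) : v ≠ tx := by
  rcases h with rfl | rfl | rfl | rfl | rfl | rfl <;> simp [tx]

lemma freeStep_psi {v : Site} (h : FreeStep v) : ψ v = -1 := by
  rcases h with rfl | rfl | rfl | rfl | rfl | rfl <;> rfl

lemma freeStep_mem_Vfin {v : Site} (h : FreeStep v) : v ∈ Vfin := by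
  rcases h with rfl | rfl | rfl | rfl | rfl | rfl <;> simp [Vfin]

lemma tx_mem_Vfin : tx ∈ Vfin := by simp [Vfin, tx]

lemma psi_sub (a b : Site) : ψ (a - b) = ψ a - ψ b := by
  simp [ψ, Prod.fst_sub, Prod.snd_sub]; ring

lemma reach_exists {C H : Set Site} {e : Site} (h : Reach C H e) :
    ∃ s, ok C e s ∧ strt e s ∈ H := by
  induction h with
  | base hx => exact ⟨[], trivial, by simpa [strt] using hx⟩
  | free _ hstep ih =>
      obtain ⟨s, h1, h2⟩ := ih
      rename_i x y _
      refine ⟨(y - x) :: s, ⟨Or.inl hstep, ?_⟩, ?_⟩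
      · simpa [sub_sub_cancel] using h1
      · simpa [strt, sub_sub_cancel] using h2
  | taxed _ hC hstep ih =>
      obtain ⟨s, h1, h2⟩ := ih
      rename_i x y _
      refine ⟨(y - x) :: s, ⟨Or.inr ⟨by rw [hstep]; rfl, hC⟩, ?_⟩, ?_⟩
      · simpa [sub_sub_cancel] using h1
      · simpa [strt, sub_sub_cancel] using h2

lemma pts_length (e : Site) (s : List Site) : (pts e s).length = s.length + 1 := by
  induction s generalizing e with
  | nil => rfl
  | cons v s ih => simp [pts, ih]

lemma ok_cut {C : Set Site} {e : Site} :
    ∀ (s : List Site) (x : Site), ok C x s → e ∈ pts x s →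
      ∃ s₂, ok C e s₂ ∧ strt e s₂ = strt x s ∧ (pts e s₂) <:+ (pts x s) := by
  intro s
  induction s with
  | nil =>
      intro x _ hmem
      simp only [pts, List.mem_singleton] at hmem
      exact ⟨[], trivial, by simp [strt, hmem], by simp [pts, hmem]⟩
  | cons v s ih =>
      intro x hok hmem
      simp only [pts, List.mem_cons] at hmem
      rcases hmem with rfl | hmem
      · exact ⟨v :: s, hok, rfl, List.suffix_refl _⟩
      · obtain ⟨s₂, h1, h2, h3⟩ := ih (x - v) hok.2 hmem
        exact ⟨s₂, h1, h2, h3.trans ⟨[x], rfl⟩⟩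

lemma exists_nodup {C H : Set Site} :
    ∀ (s : List Site) (e : Site), ok C e s → strt e s ∈ H →
      ∃ s', ok C e s' ∧ strt e s' ∈ H ∧ (pts e s').Nodup ∧ s'.length ≤ s.length := by
  intro s
  induction s with
  | nil => intro e _ hH; exact ⟨[], trivial, hH, by simp [pts], le_refl _⟩
  | cons v s ih =>
      intro e hok hH
      obtain ⟨s₁, h1, h2, h3, h4⟩ := ih (e - v) hok.2 hH
      by_cases hmem : e ∈ pts (e - v) s₁
      · obtain ⟨s₂, g1, g2, g3⟩ := ok_cut s₁ (e - v) h1 hmem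
        refine ⟨s₂, g1, g2 ▸ h2, h3.sublist g3.sublist, ?_⟩
        have := g3.length_le
        rw [pts_length, pts_length] at this
        simp only [List.length_cons]
        omega
      · refine ⟨v :: s₁, ⟨hok.1, h1⟩, h2, ?_, by simpa using h4⟩
        simpa [pts] using ⟨hmem, h3⟩

lemma txd_sublist (e : Site) (s : List Site) : List.Sublist (txd e s) (pts e s) := by
  induction s generalizing e with
  | nil => simp [txd, pts]
  | cons v s ih =>
      by_cases h : v = tx
      · simpa [txd, pts, h] using (ih (e - v)).cons₂ e
      · simpa [txd, pts, h] using (ih (e - v)).cons e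

lemma txd_cons_tx (e : Site) (s : List Site) : txd e (tx :: s) = e :: txd (e - tx) s := by
  simp [txd]

lemma txd_cons_free {v : Site} (hv : v ≠ tx) (e : Site) (s : List Site) :
    txd e (v :: s) = txd (e - v) s := by
  simp [txd, hv]

lemma txd_mem {C : Set Site} {e : Site} {s : List Site} (h : ok C e s) :
    ∀ y ∈ txd e s, y ∈ C := by
  induction s generalizing e with
  | nil => simp [txd]
  | cons v s ih =>
      intro y hy
      by_cases hv : v = tx
      · rcases h.1 with hf | ⟨_, hc⟩
        · exact absurd hv (freeStep_ne_tx hf)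
        · subst hv
          rw [txd_cons_tx] at hy
          rcases List.mem_cons.mp hy with rfl | hy
          · exact hc
          · exact ih h.2 y hy
      · rw [txd_cons_free hv] at hy
        exact ih h.2 y hy

lemma txd_length_le (e : Site) (s : List Site) : (txd e s).length ≤ s.length := by
  induction s generalizing e with
  | nil => simp [txd]
  | cons v s ih =>
      by_cases h : v = tx <;> simp [txd, h] <;>
        exact le_trans (ih _) (by omega)

lemma strt_psi {C : Set Site} {e : Site} {s : List Site} (h : ok C e s) :
    ψ (strt e s) = ψ e + s.length - 3 * (txd e s).length := by
  induction s generalizing e with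
  | nil => simp [strt, txd]
  | cons v s ih =>
      have hrec := ih (e := e - v) h.2
      rcases h.1 with hf | ⟨htx, _⟩
      · have hv : v ≠ tx := freeStep_ne_tx hf
        have h2' : ψ (e - v) = ψ e + 1 := by rw [psi_sub, freeStep_psi hf]; ring
        rw [show strt e (v :: s) = strt (e - v) s from rfl, txd_cons_free hv, hrec, h2']
        simp only [List.length_cons]
        push_cast; ring
      · subst htx
        have h2' : ψ (e - tx) = ψ e - 2 := by rw [psi_sub]; rfl
        rw [show strt e (tx :: s) = strt (e - tx) s from rfl, txd_cons_tx, hrec, h2']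
        simp only [List.length_cons]
        push_cast; ring

lemma ok_mem_Vfin {C : Set Site} {e : Site} {s : List Site} (h : ok C e s) :
    ∀ v ∈ s, v ∈ Vfin := by
  induction s generalizing e with
  | nil => simp
  | cons v s ih =>
      intro w hw
      rcases List.mem_cons.mp hw with rfl | hw
      · rcases h.1 with hf | ⟨htx, _⟩
        · exact freeStep_mem_Vfin hf
        · exact htx ▸ tx_mem_Vfin
      · exact ih h.2 _ hw

end PRDaux

open scoped ENNReal

lemma tsum_ite_ge (a : ℝ≥0∞) (k : ℕ) :
    ∑' n : ℕ, (if k ≤ n then a ^ n else 0) = a ^ k * (1 - a)⁻¹ := by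
  rw [← ENNReal.tsum_geometric a, ← ENNReal.tsum_mul_left]
  refine tsum_eq_tsum_of_ne_zero_bij (g := fun m : ℕ => a ^ k * a ^ m)
    (fun x => x.1 + k) ?_ ?_ ?_
  · intro x y hxy
    exact Subtype.ext (Nat.add_right_cancel hxy)
  · intro n hn
    simp only [Function.mem_support, ne_eq, ite_eq_right_iff, not_forall] at hn
    obtain ⟨hkn, hne⟩ := hn
    refine ⟨⟨n - k, ?_⟩, Nat.sub_add_cancel hkn⟩
    simp only [Function.mem_support, ne_eq, ← pow_add]
    rw [show k + (n - k) = n from by omega]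
    exact hne
  · rintro ⟨m, hm⟩
    simp only [if_pos (Nat.le_add_left k m)]
    rw [pow_add]
    ring


open PRDaux

/-- If each site of `ℤ³` is independently closed with probability `q < 8⁻³`
(formalized by requiring that any finite set of sites is entirely closed with
probability exactly `q` to the cardinality), then the probability that `(k,k,0)` is
reachable from the half-space `H` by a permissible path is at most `8·(7q)^k`,
for every `k ≥ 1`. -/
theorem prob_reach_diagonal_le {Ω : Type*} [MeasurableSpace Ω]
    (μ : Measure Ω) [IsProbabilityMeasure μ]
    (q : ℝ) (hq0 : 0 ≤ q) (hq : q < (8 : ℝ)⁻¹ ^ 3)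
    (Cl : Ω → Set Site)
    (hiid : ∀ F : Finset Site,
      μ {ω | ∀ x ∈ F, x ∈ Cl ω} = ENNReal.ofReal (q ^ F.card))
    (k : ℕ) (hk : 1 ≤ k) :
    μ {ω | Reach (Cl ω) Hhalf (((k : ℤ), (k : ℤ), (0 : ℤ)) : Site)} ≤
      ENNReal.ofReal (8 * (7 * q) ^ k) := by
  classical
  set e : Site := ((k : ℤ), (k : ℤ), (0 : ℤ)) with he
  set r : ℝ := q ^ ((3 : ℝ)⁻¹) with hrdef
  have hr0 : 0 ≤ r := Real.rpow_nonneg hq0 _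
  have hr3 : r ^ (3 : ℕ) = q := by
    rw [hrdef, ← Real.rpow_natCast (q ^ ((3 : ℝ)⁻¹)) 3, ← Real.rpow_mul hq0]
    norm_num
  have hr18 : r < 8⁻¹ := by
    have h1 : q ^ ((3 : ℝ)⁻¹) < ((8 : ℝ)⁻¹ ^ 3) ^ ((3 : ℝ)⁻¹) :=
      Real.rpow_lt_rpow hq0 hq (by norm_num)
    have h2 : (((8 : ℝ)⁻¹ ^ 3) : ℝ) ^ ((3 : ℝ)⁻¹) = 8⁻¹ := by
      rw [← Real.rpow_natCast ((8 : ℝ)⁻¹) 3, ← Real.rpow_mul (by norm_num)]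
      norm_num
    rw [hrdef]; rw [h2] at h1; exact h1
  have hr1 : r ≤ 1 := hr18.le.trans (by norm_num)
  let τ := {v : Site // v ∈ Vfin}
  let m : List τ → List Site := fun s => s.map Subtype.val
  let A : ℝ≥0∞ := ENNReal.ofReal (r ^ (2 * k))
  let c : ℝ≥0∞ := ENNReal.ofReal r
  let Gd : List Site → Prop := fun s =>
    (txd e s).Nodup ∧ s.length + 2 * k ≤ 3 * (txd e s).length
  let Ev : List Site → Set Ω := fun s => {ω | ∀ y ∈ txd e s, y ∈ Cl ω}
  have hsub : {ω | Reach (Cl ω) Hhalf e} ⊆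
      ⋃ (s : List τ), ⋃ (_ : Gd (m s)), Ev (m s) := by
    intro ω hω
    obtain ⟨s0, hok0, hH0⟩ := reach_exists hω
    obtain ⟨s, hok, hH, hnd, -⟩ := exists_nodup s0 e hok0 hH0
    have hmemV : ∀ v ∈ s, v ∈ Vfin := ok_mem_Vfin hok
    refine Set.mem_iUnion.mpr ⟨s.attach.map (fun x => ⟨x.1, hmemV x.1 x.2⟩), ?_⟩
    have hms : m (s.attach.map (fun x => (⟨x.1, hmemV x.1 x.2⟩ : τ))) = s := by
      simp [m, List.map_map, Function.comp_def]
      exact List.attach_map_subtype_val s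
    rw [hms]
    have hGd : Gd s := by
      constructor
      · exact hnd.sublist (txd_sublist e s)
      · have hpsi := strt_psi hok
        have hH' : ψ (strt e s) ≤ 0 := hH
        have hpsie : ψ e = 2 * (k : ℤ) := by simp [ψ, he]; ring
        rw [hpsi, hpsie] at hH'
        omega
    exact Set.mem_iUnion.mpr ⟨hGd, fun y hy => txd_mem hok y hy⟩
  have hterm : ∀ s : List τ, μ (⋃ (_ : Gd (m s)), Ev (m s)) ≤
      (if k ≤ s.length then A * c ^ s.length else 0) := by
    intro s
    by_cases hg : Gd (m s)
    · refine le_trans (measure_mono (Set.iUnion_subset fun _ => subset_rfl)) ?_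
      have hlt : (txd e (m s)).length ≤ (m s).length := txd_length_le _ _
      have hms_len : (m s).length = s.length := List.length_map _
      obtain ⟨hnd, hineq⟩ := hg
      have hkn : k ≤ s.length := by omega
      rw [if_pos hkn]
      have hev : Ev (m s) = {ω | ∀ x ∈ (txd e (m s)).toFinset, x ∈ Cl ω} := by
        ext ω; simp [Ev]
      rw [hev, hiid, List.toFinset_card_of_nodup hnd]
      have hqt : q ^ (txd e (m s)).length ≤ r ^ (2 * k) * r ^ s.length := by
        calc q ^ (txd e (m s)).length = r ^ (3 * (txd e (m s)).length) := by
              rw [← hr3, ← pow_mul]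
          _ ≤ r ^ (2 * k + s.length) := pow_le_pow_of_le_one hr0 hr1 (by omega)
          _ = r ^ (2 * k) * r ^ s.length := pow_add r _ _
      calc ENNReal.ofReal (q ^ (txd e (m s)).length)
          ≤ ENNReal.ofReal (r ^ (2 * k) * r ^ s.length) := ENNReal.ofReal_le_ofReal hqt
        _ = A * c ^ s.length := by
            rw [ENNReal.ofReal_mul (by positivity)]
            congr 1
            exact ENNReal.ofReal_pow hr0 _
    · simp [hg]
  have hcard : Fintype.card τ = 7 := by
    rw [Fintype.card_coe]; decide
  have hsum : ∑' s : List τ, (if k ≤ s.length then A * c ^ s.length else 0)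
      = A * ((7 * c) ^ k * (1 - 7 * c)⁻¹) := by
    have h1 : ∑' s : List τ, (if k ≤ s.length then A * c ^ s.length else 0)
        = ∑' p : (Σ n : ℕ, Fin n → τ), (if k ≤ p.1 then A * c ^ p.1 else 0) := by
      rw [← Equiv.tsum_eq (List.equivSigmaTuple (α := τ))
        (fun p => if k ≤ p.1 then A * c ^ p.1 else 0)]
      simp [List.equivSigmaTuple]
      congr
    rw [h1, ENNReal.tsum_sigma']
    have h2 : ∀ n : ℕ, ∑' _ : Fin n → τ, (if k ≤ n then A * c ^ n else 0)
        = A * (if k ≤ n then (7 * c) ^ n else 0) := by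
      intro n
      rw [tsum_fintype, Finset.sum_const, nsmul_eq_mul, Finset.card_univ,
        Fintype.card_fun, hcard, Fintype.card_fin]
      by_cases h : k ≤ n
      · simp only [if_pos h, mul_pow]
        push_cast
        ring
      · simp [h]
    rw [tsum_congr h2, ENNReal.tsum_mul_left, tsum_ite_ge]
  have h7c : 7 * c = ENNReal.ofReal (7 * r) := by
    rw [ENNReal.ofReal_mul (by norm_num : (0 : ℝ) ≤ 7)]
    simp [c]
  have hinv : (1 - 7 * c)⁻¹ ≤ 8 := by
    rw [h7c]
    have h18 : (8 : ℝ≥0∞)⁻¹ ≤ 1 - ENNReal.ofReal (7 * r) := by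
      have h8 : (8 : ℝ≥0∞)⁻¹ = ENNReal.ofReal (8⁻¹) := by
        rw [ENNReal.ofReal_inv_of_pos (by norm_num)]
        norm_num
      rw [h8, ← ENNReal.ofReal_one, ← ENNReal.ofReal_sub _ (by positivity)]
      exact ENNReal.ofReal_le_ofReal (by nlinarith [hr18])
    calc (1 - ENNReal.ofReal (7 * r))⁻¹ ≤ ((8 : ℝ≥0∞)⁻¹)⁻¹ := ENNReal.inv_le_inv' h18
      _ = 8 := inv_inv _
  have h7ck : A * (7 * c) ^ k = ENNReal.ofReal ((7 * q) ^ k) := by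
    rw [h7c, ← ENNReal.ofReal_pow (by positivity), ← ENNReal.ofReal_mul (by positivity)]
    congr 1
    rw [← hr3]; ring
  calc μ {ω | Reach (Cl ω) Hhalf e}
      ≤ μ (⋃ (s : List τ), ⋃ (_ : Gd (m s)), Ev (m s)) := measure_mono hsub
    _ ≤ ∑' s : List τ, μ (⋃ (_ : Gd (m s)), Ev (m s)) := measure_iUnion_le _
    _ ≤ ∑' s : List τ, (if k ≤ s.length then A * c ^ s.length else 0) :=
        ENNReal.tsum_le_tsum hterm
    _ = A * ((7 * c) ^ k * (1 - 7 * c)⁻¹) := hsum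
    _ ≤ A * ((7 * c) ^ k * 8) := mul_le_mul_right (mul_le_mul_right hinv _) _
    _ = 8 * (A * (7 * c) ^ k) := by ring
    _ = 8 * ENNReal.ofReal ((7 * q) ^ k) := by rw [h7ck]
    _ = ENNReal.ofReal (8 * (7 * q) ^ k) := by
        rw [ENNReal.ofReal_mul (by norm_num : (0 : ℝ) ≤ 8)]
        norm_num
end

section
/- Cell comparison: fix L ≥ 1, let B = [0,4L)×[0,16L)×[0,32L) and B̂ = [0,4L)×[0,4L)×[0,2L) (intersected with ℤ³). For x ∈ B̂ define cell(x) = (x₁, 4x₂, 16x₃) + {0}×[0,4)×[0,16). Given a configuration on B, define the auxiliary configuration on B̂ by: x is open iff all sites of cell(x) are open, and x is initially occupied iff all sites of cell(x) are initially occupied. Run modified bootstrap percolation with threshold 2 on B̂ from the auxiliary configuration (all sites outside B̂ closed), and on B from the original configuration (all sites outside B closed). If x becomes occupied at some time in the auxiliary dynamics, then every site of cell(x) becomes occupied at some time in the original dynamics. -/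
/-- The standard coordinate vectors of `ℤ³`. -/
def eVec : Fin 3 → Site := ![(1, 0, 0), (0, 1, 0), (0, 0, 1)]

/-- The modified bootstrap rule with threshold 2. -/
def ModRule (occ : Set Site) (x : Site) : Prop :=
  ∃ i j : Fin 3, i ≠ j ∧
    (x - eVec i ∈ occ ∨ x + eVec i ∈ occ) ∧
    (x - eVec j ∈ occ ∨ x + eVec j ∈ occ)

/-- Modified bootstrap dynamics with closed set `C`, initially occupied set `O`. -/
def occSeq (C O : Set Site) : ℕ → Set Site
  | 0 => O
  | t + 1 => occSeq C O t ∪ {x | x ∉ C ∧ ModRule (occSeq C O t) x}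

/-- The brick `B = [0,4L) × [0,16L) × [0,32L)`. -/
def Brick (L : ℕ) : Set Site :=
  {y | 0 ≤ y.1 ∧ y.1 < 4 * L ∧ 0 ≤ y.2.1 ∧ y.2.1 < 16 * L ∧ 0 ≤ y.2.2 ∧ y.2.2 < 32 * L}

/-- The proto-brick `B̂ = [0,4L) × [0,4L) × [0,2L)`. -/
def ProtoBrick (L : ℕ) : Set Site :=
  {x | 0 ≤ x.1 ∧ x.1 < 4 * L ∧ 0 ≤ x.2.1 ∧ x.2.1 < 4 * L ∧ 0 ≤ x.2.2 ∧ x.2.2 < 2 * L}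

/-- `cell(x) = (x₁, 4x₂, 16x₃) + {0} × [0,4) × [0,16)`. -/
def cell (x : Site) : Set Site :=
  {y | y.1 = x.1 ∧ 4 * x.2.1 ≤ y.2.1 ∧ y.2.1 < 4 * x.2.1 + 4 ∧
       16 * x.2.2 ≤ y.2.2 ∧ y.2.2 < 16 * x.2.2 + 16}

/-- In the auxiliary configuration, `x` is closed iff `x ∉ B̂` or some site of
`cell(x)` is closed. -/
def AuxClosed (L : ℕ) (C : Set Site) : Set Site :=
  {x | x ∉ ProtoBrick L ∨ ∃ y ∈ cell x, y ∈ C}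

/-- In the auxiliary configuration, `x` is initially occupied iff `x ∈ B̂` and every
site of `cell(x)` is initially occupied. -/
def AuxOcc (L : ℕ) (O : Set Site) : Set Site :=
  {x | x ∈ ProtoBrick L ∧ ∀ y ∈ cell x, y ∈ O}

/-! ### Auxiliary lemmas -/

lemma occSeq_subset_succ (C O : Set Site) (t : ℕ) :
    occSeq C O t ⊆ occSeq C O (t + 1) := by
  intro y hy; exact Or.inl hy

lemma occSeq_mono (C O : Set Site) {s t : ℕ} (h : s ≤ t) :
    occSeq C O s ⊆ occSeq C O t := by
  induction t with
  | zero => simp [Nat.le_zero.mp h]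
  | succ t ih =>
    rcases Nat.le_succ_iff.mp h with h' | h'
    · exact (ih h').trans (occSeq_subset_succ C O t)
    · subst h'; rfl

/-- The set of eventually occupied sites. -/
def Ev (C O : Set Site) : Set Site := ⋃ t, occSeq C O t

lemma mem_Ev {C O : Set Site} {y : Site} : y ∈ Ev C O ↔ ∃ t, y ∈ occSeq C O t := by
  simp [Ev]

lemma modRule_mono {occ occ' : Set Site} (h : occ ⊆ occ') {x : Site}
    (hx : ModRule occ x) : ModRule occ' x := by
  obtain ⟨i, j, hij, hi, hj⟩ := hx
  exact ⟨i, j, hij, hi.imp (h ·) (h ·), hj.imp (h ·) (h ·)⟩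

lemma Ev_closed {C O : Set Site} {y : Site} (hy : y ∉ C) (h : ModRule (Ev C O) y) :
    y ∈ Ev C O := by
  obtain ⟨i, j, hij, hi, hj⟩ := h
  have hex : ∀ z w : Site, (z ∈ Ev C O ∨ w ∈ Ev C O) →
      ∃ t, z ∈ occSeq C O t ∨ w ∈ occSeq C O t := by
    rintro z w (hz | hw)
    · obtain ⟨t, ht⟩ := mem_Ev.mp hz; exact ⟨t, Or.inl ht⟩
    · obtain ⟨t, ht⟩ := mem_Ev.mp hw; exact ⟨t, Or.inr ht⟩
  obtain ⟨t₁, h₁⟩ := hex _ _ hi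
  obtain ⟨t₂, h₂⟩ := hex _ _ hj
  refine mem_Ev.mpr ⟨max t₁ t₂ + 1, Or.inr ⟨hy, i, j, hij, ?_, ?_⟩⟩
  · exact h₁.imp (occSeq_mono C O (le_max_left t₁ t₂) ·)
      (occSeq_mono C O (le_max_left t₁ t₂) ·)
  · exact h₂.imp (occSeq_mono C O (le_max_right t₁ t₂) ·)
      (occSeq_mono C O (le_max_right t₁ t₂) ·)

/-- Filling lemma: a region `S` of open sites, supported in two distinct directions,
gets completely filled. -/
lemma fill_cell (E Cl S : Set Site)
    (hopen : ∀ y ∈ S, y ∉ Cl)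
    (hE : ∀ y, y ∉ Cl → ModRule E y → y ∈ E)
    (i j : Fin 3) (hij : i ≠ j) (d₁ d₂ : Site → ℕ)
    (hinv₁ : ∀ (y : Site) (k : Fin 3), k ≠ i →
      d₁ (y - eVec k) = d₁ y ∧ d₁ (y + eVec k) = d₁ y)
    (hinv₂ : ∀ (y : Site) (k : Fin 3), k ≠ j →
      d₂ (y - eVec k) = d₂ y ∧ d₂ (y + eVec k) = d₂ y)
    (h₁ : ∀ y ∈ S, (y - eVec i ∈ E ∨ y + eVec i ∈ E) ∨
      ∃ z, (z = y - eVec i ∨ z = y + eVec i) ∧ z ∈ S ∧ d₁ z < d₁ y)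
    (h₂ : ∀ y ∈ S, (y - eVec j ∈ E ∨ y + eVec j ∈ E) ∨
      ∃ z, (z = y - eVec j ∨ z = y + eVec j) ∧ z ∈ S ∧ d₂ z < d₂ y) :
    S ⊆ E := by
  have key : ∀ n, ∀ y ∈ S, d₁ y + d₂ y ≤ n → y ∈ E := by
    intro n
    induction n with
    | zero =>
      intro y hy hn
      refine hE y (hopen y hy) ⟨i, j, hij, ?_, ?_⟩
      · rcases h₁ y hy with h | ⟨z, _, _, hd⟩
        · exact h
        · omega
      · rcases h₂ y hy with h | ⟨z, _, _, hd⟩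
        · exact h
        · omega
    | succ n ih =>
      intro y hy hn
      refine hE y (hopen y hy) ⟨i, j, hij, ?_, ?_⟩
      · rcases h₁ y hy with h | ⟨z, hz, hzS, hd⟩
        · exact h
        · have hz2 : d₂ z = d₂ y := by
            rcases hz with rfl | rfl
            · exact (hinv₂ y i hij).1
            · exact (hinv₂ y i hij).2
          have hzE : z ∈ E := ih z hzS (by omega)
          rcases hz with rfl | rfl
          · exact Or.inl hzE
          · exact Or.inr hzE
      · rcases h₂ y hy with h | ⟨z, hz, hzS, hd⟩
        · exact h
        · have hz1 : d₁ z = d₁ y := by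
            rcases hz with rfl | rfl
            · exact (hinv₁ y j (Ne.symm hij)).1
            · exact (hinv₁ y j (Ne.symm hij)).2
          have hzE : z ∈ E := ih z hzS (by omega)
          rcases hz with rfl | rfl
          · exact Or.inl hzE
          · exact Or.inr hzE
  intro y hy
  exact key _ y hy le_rfl

/-- A support structure in direction `i`, given that one of the neighbouring cells is
entirely eventually occupied. -/
lemma dir_support (E : Set Site) (x : Site) (i : Fin 3)
    (h : (∀ z ∈ cell (x - eVec i), z ∈ E) ∨ (∀ z ∈ cell (x + eVec i), z ∈ E)) :
    ∃ d : Site → ℕ,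
      (∀ (y : Site) (k : Fin 3), k ≠ i → d (y - eVec k) = d y ∧ d (y + eVec k) = d y) ∧
      (∀ y ∈ cell x, (y - eVec i ∈ E ∨ y + eVec i ∈ E) ∨
        ∃ z, (z = y - eVec i ∨ z = y + eVec i) ∧ z ∈ cell x ∧ d z < d y) := by
  fin_cases i <;> rcases h with h | h
  · -- i = 0, minus side
    refine ⟨fun _ => 0, by simp, fun y hy => Or.inl (Or.inl (h _ ?_))⟩
    simp only [cell, Set.mem_setOf_eq] at hy
    simp [cell, eVec]
    omega
  · -- i = 0, plus side
    refine ⟨fun _ => 0, by simp, fun y hy => Or.inl (Or.inr (h _ ?_))⟩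
    simp only [cell, Set.mem_setOf_eq] at hy
    simp [cell, eVec]
    omega
  · -- i = 1, minus side
    refine ⟨fun y => (y.2.1 - 4 * x.2.1).toNat, ?_, ?_⟩
    · intro y k hk
      fin_cases k
      · simp [eVec]
      · exact absurd rfl hk
      · simp [eVec]
    · intro y hy
      simp only [cell, Set.mem_setOf_eq] at hy
      by_cases hb : y.2.1 = 4 * x.2.1
      · refine Or.inl (Or.inl (h _ ?_))
        simp [cell, eVec]
        omega
      · refine Or.inr ⟨y - eVec 1, Or.inl rfl, ?_, ?_⟩
        · simp [cell, eVec]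
          omega
        · simp [eVec]
          omega
  · -- i = 1, plus side
    refine ⟨fun y => (4 * x.2.1 + 3 - y.2.1).toNat, ?_, ?_⟩
    · intro y k hk
      fin_cases k
      · simp [eVec]
      · exact absurd rfl hk
      · simp [eVec]
    · intro y hy
      simp only [cell, Set.mem_setOf_eq] at hy
      by_cases hb : y.2.1 = 4 * x.2.1 + 3
      · refine Or.inl (Or.inr (h _ ?_))
        simp [cell, eVec]
        omega
      · refine Or.inr ⟨y + eVec 1, Or.inr rfl, ?_, ?_⟩
        · simp [cell, eVec]
          omega
        · simp [eVec]
          omega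
  · -- i = 2, minus side
    refine ⟨fun y => (y.2.2 - 16 * x.2.2).toNat, ?_, ?_⟩
    · intro y k hk
      fin_cases k
      · simp [eVec]
      · simp [eVec]
      · exact absurd rfl hk
    · intro y hy
      simp only [cell, Set.mem_setOf_eq] at hy
      by_cases hb : y.2.2 = 16 * x.2.2
      · refine Or.inl (Or.inl (h _ ?_))
        simp [cell, eVec]
        omega
      · refine Or.inr ⟨y - eVec 2, Or.inl rfl, ?_, ?_⟩
        · simp [cell, eVec]
          omega
        · simp [eVec]
          omega
  · -- i = 2, plus side
    refine ⟨fun y => (16 * x.2.2 + 15 - y.2.2).toNat, ?_, ?_⟩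
    · intro y k hk
      fin_cases k
      · simp [eVec]
      · simp [eVec]
      · exact absurd rfl hk
    · intro y hy
      simp only [cell, Set.mem_setOf_eq] at hy
      by_cases hb : y.2.2 = 16 * x.2.2 + 15
      · refine Or.inl (Or.inr (h _ ?_))
        simp [cell, eVec]
        omega
      · refine Or.inr ⟨y + eVec 2, Or.inr rfl, ?_, ?_⟩
        · simp [cell, eVec]
          omega
        · simp [eVec]
          omega

lemma cell_subset_brick {L : ℕ} {x : Site} (hx : x ∈ ProtoBrick L) :
    ∀ y ∈ cell x, y ∈ Brick L := by
  intro y hy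
  simp only [ProtoBrick, Set.mem_setOf_eq] at hx
  simp only [cell, Set.mem_setOf_eq] at hy
  simp only [Brick, Set.mem_setOf_eq]
  omega

/-- Cell comparison: if `x` becomes occupied in the modified bootstrap dynamics on the
proto-brick from the auxiliary configuration (all sites outside `B̂` closed), then every
site of `cell(x)` becomes occupied in the dynamics on the brick from the original
configuration (all sites outside `B` closed). -/
theorem cell_comparison (L : ℕ) (hL : 1 ≤ L) (C O : Set Site)
    (hO : ∀ y ∈ O, y ∉ C) (x : Site)
    (hx : ∃ t : ℕ, x ∈ occSeq (AuxClosed L C) (AuxOcc L O) t) :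
    ∀ y ∈ cell x, ∃ t : ℕ, y ∈ occSeq (C ∪ (Brick L)ᶜ) (O ∩ Brick L) t := by
  set E := Ev (C ∪ (Brick L)ᶜ) (O ∩ Brick L) with hE
  have key : ∀ t, ∀ x ∈ occSeq (AuxClosed L C) (AuxOcc L O) t, ∀ y ∈ cell x, y ∈ E := by
    intro t
    induction t with
    | zero =>
      intro x hx y hy
      obtain ⟨hxB, hall⟩ := hx
      exact mem_Ev.mpr ⟨0, hall y hy, cell_subset_brick hxB y hy⟩
    | succ t ih =>
      rintro x (hx | ⟨hnc, i, j, hij, hi, hj⟩) y hy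
      · exact ih x hx y hy
      · simp only [AuxClosed, Set.mem_setOf_eq, not_or, not_exists] at hnc
        push_neg at hnc
        obtain ⟨hxB, hopenC⟩ := hnc
        have hopen : ∀ y ∈ cell x, y ∉ C ∪ (Brick L)ᶜ := by
          intro z hz
          simp only [Set.mem_union, Set.mem_compl_iff, not_or, not_not]
          exact ⟨hopenC z hz, cell_subset_brick hxB z hz⟩
        obtain ⟨d₁, hinv₁, hs₁⟩ := dir_support E x i
          (hi.imp (fun h z hz => ih _ h z hz) (fun h z hz => ih _ h z hz))
        obtain ⟨d₂, hinv₂, hs₂⟩ := dir_support E x j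
          (hj.imp (fun h z hz => ih _ h z hz) (fun h z hz => ih _ h z hz))
        exact fill_cell E (C ∪ (Brick L)ᶜ) (cell x) hopen
          (fun z hz hm => Ev_closed hz hm) i j hij d₁ d₂ hinv₁ hinv₂ hs₁ hs₂ hy
  obtain ⟨t, ht⟩ := hx
  intro y hy
  exact mem_Ev.mp (key t x ht y hy)
end

section
/- If x, y ∈ ℤ³ each lie on an oriented path π in a fixed layer Λ_k whose steps are e₁ and -e₂ with no three consecutive equal steps, and z = y - (1,1,0) for some y ∈ π, then there exist integers a, b ∈ [0,3] such that z + a·e₁ ∈ π and z + b·e₂ ∈ π. -/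
/-- A bi-infinite oriented path in layer `Λ_k`: every site has third coordinate `k`,
every step is `e₁ = (1,0,0)` or `-e₂ = (0,-1,0)`, and no three consecutive steps are
equal. -/
def OrientedBiPath (f : ℤ → Site) (k : ℤ) : Prop :=
  (∀ t : ℤ, (f t).2.2 = k) ∧
  (∀ t : ℤ, f (t + 1) - f t = ((1 : ℤ), (0 : ℤ), (0 : ℤ)) ∨
            f (t + 1) - f t = ((0 : ℤ), (-1 : ℤ), (0 : ℤ))) ∧
  (∀ t : ℤ, ¬ (f (t + 1) - f t = f (t + 2) - f (t + 1) ∧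
               f (t + 2) - f (t + 1) = f (t + 3) - f (t + 2)))

/-- For a site `y` on an oriented path in layer `Λ_k`, the translate `z = y - (1,1,0)`
satisfies: there are `a, b ∈ [0,3]` with `z + a·e₁` and `z + b·e₂` on the path. -/
theorem translate_close_to_path (f : ℤ → Site) (k : ℤ) (hf : OrientedBiPath f k)
    (t₀ : ℤ) (z : Site) (hz : z = f t₀ - ((1 : ℤ), (1 : ℤ), (0 : ℤ))) :
    ∃ a b : ℤ, 0 ≤ a ∧ a ≤ 3 ∧ 0 ≤ b ∧ b ≤ 3 ∧
      (∃ s : ℤ, f s = z + ((a, (0 : ℤ), (0 : ℤ)) : Site)) ∧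
      (∃ s : ℤ, f s = z + (((0 : ℤ), b, (0 : ℤ)) : Site)) := by
  obtain ⟨-, hstep, hno3⟩ := hf
  subst hz
  -- forward part: find a with f s = f t₀ - (1,1,0) + (a,0,0)
  have hA : ∃ a : ℤ, 0 ≤ a ∧ a ≤ 3 ∧
      ∃ s : ℤ, f s = f t₀ - ((1:ℤ),(1:ℤ),(0:ℤ)) + ((a, (0:ℤ), (0:ℤ)) : Site) := by
    have h1 := hstep t₀
    have h2 := hstep (t₀ + 1)
    have h3 := hstep (t₀ + 2)
    rw [show t₀ + 1 + 1 = t₀ + 2 from by ring] at h2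
    rw [show t₀ + 2 + 1 = t₀ + 3 from by ring] at h3
    rcases h1 with h1 | h1
    · rcases h2 with h2 | h2
      · rcases h3 with h3 | h3
        · exact absurd ⟨h1.trans h2.symm, h2.trans h3.symm⟩ (hno3 t₀)
        · refine ⟨3, by norm_num, by norm_num, t₀ + 3, ?_⟩
          simp only [Prod.ext_iff, Prod.fst_sub, Prod.snd_sub, Prod.fst_add,
            Prod.snd_add] at h1 h2 h3 ⊢
          omega
      · refine ⟨2, by norm_num, by norm_num, t₀ + 2, ?_⟩
        simp only [Prod.ext_iff, Prod.fst_sub, Prod.snd_sub, Prod.fst_add,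
          Prod.snd_add] at h1 h2 ⊢
        omega
    · refine ⟨1, by norm_num, by norm_num, t₀ + 1, ?_⟩
      simp only [Prod.ext_iff, Prod.fst_sub, Prod.snd_sub, Prod.fst_add,
        Prod.snd_add] at h1 ⊢
      omega
  -- backward part: find b with f s = f t₀ - (1,1,0) + (0,b,0)
  have hB : ∃ b : ℤ, 0 ≤ b ∧ b ≤ 3 ∧
      ∃ s : ℤ, f s = f t₀ - ((1:ℤ),(1:ℤ),(0:ℤ)) + (((0:ℤ), b, (0:ℤ)) : Site) := by
    have h1 := hstep (t₀ - 1)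
    have h2 := hstep (t₀ - 2)
    have h3 := hstep (t₀ - 3)
    rw [show t₀ - 1 + 1 = t₀ from by ring] at h1
    rw [show t₀ - 2 + 1 = t₀ - 1 from by ring] at h2
    rw [show t₀ - 3 + 1 = t₀ - 2 from by ring] at h3
    rcases h1 with h1 | h1
    · refine ⟨1, by norm_num, by norm_num, t₀ - 1, ?_⟩
      simp only [Prod.ext_iff, Prod.fst_sub, Prod.snd_sub, Prod.fst_add,
        Prod.snd_add] at h1 ⊢
      omega
    · rcases h2 with h2 | h2
      · refine ⟨2, by norm_num, by norm_num, t₀ - 2, ?_⟩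
        simp only [Prod.ext_iff, Prod.fst_sub, Prod.snd_sub, Prod.fst_add,
          Prod.snd_add] at h1 h2 ⊢
        omega
      · rcases h3 with h3 | h3
        · refine ⟨3, by norm_num, by norm_num, t₀ - 3, ?_⟩
          simp only [Prod.ext_iff, Prod.fst_sub, Prod.snd_sub, Prod.fst_add,
            Prod.snd_add] at h1 h2 h3 ⊢
          omega
        · have := hno3 (t₀ - 3)
          rw [show t₀ - 3 + 1 = t₀ - 2 from by ring, show t₀ - 3 + 2 = t₀ - 1 from by ring,
            show t₀ - 3 + 3 = t₀ from by ring] at this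
          exact absurd ⟨h3.trans h2.symm, h2.trans h1.symm⟩ this
  obtain ⟨a, ha0, ha3, sa, hsa⟩ := hA
  obtain ⟨b, hb0, hb3, sb, hsb⟩ := hB
  exact ⟨a, b, ha0, ha3, hb0, hb3, ⟨sa, hsa⟩, ⟨sb, hsb⟩⟩
end
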